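/- Let A be a unital ring, B ⊆ A a two-sided ideal, and τ : B → V a linear map into a vector space V that is a trace in the sense that τ(xy) = τ(yx) whenever x ∈ A, y ∈ B with xy, yx ∈ B. If a ∈ A and r, r' ∈ A both satisfy 1 − ra, 1 − ar, 1 − r'a, 1 − ar' ∈ B, then τ(1 − ra) − τ(1 − ar) = τ(1 − r'a) − τ(1 − ar'), i.e., the algebraically defined index τ[a,r] is independent of the choice of almost-inverse r. -/
import Mathlib


/-- Let `A` be a unital algebra over a field `k`, `B ⊆ A` a two-sided
ideal, and `τ : B → V` a linear map into a `k`-vector space that is a trace in the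
sense that `τ(xy) = τ(yx)` whenever `x ∈ A`, `y ∈ B` (so that `xy, yx ∈ B`). If
`r, r'` are almost-inverses of `a` (`1 − ra, 1 − ar, 1 − r'a, 1 − ar' ∈ B`) then
`τ(1 − ra) − τ(1 − ar) = τ(1 − r'a) − τ(1 − ar')`: the algebraically defined index
`τ[a,r]` does not depend on the choice of almost-inverse. -/
theorem stmt9 {k A V : Type*} [Field k] [Ring A] [Algebra k A]
    [AddCommGroup V] [Module k V]
    (B : Submodule k A)
    (hBl : ∀ x : A, ∀ y ∈ B, x * y ∈ B)
    (hBr : ∀ x : A, ∀ y ∈ B, y * x ∈ B)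
    (τ : B →ₗ[k] V)
    (htrace : ∀ (x y : A) (hy : y ∈ B),
      τ ⟨x * y, hBl x y hy⟩ = τ ⟨y * x, hBr x y hy⟩)
    (a r r' : A)
    (h₁ : 1 - r * a ∈ B) (h₂ : 1 - a * r ∈ B)
    (h₃ : 1 - r' * a ∈ B) (h₄ : 1 - a * r' ∈ B) :
    τ ⟨1 - r * a, h₁⟩ - τ ⟨1 - a * r, h₂⟩
      = τ ⟨1 - r' * a, h₃⟩ - τ ⟨1 - a * r', h₄⟩ := by
  have hd : r' - r ∈ B := by
    have : r' - r = r' * (1 - a * r) - (1 - r' * a) * r := by noncomm_ring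
    rw [this]
    exact B.sub_mem (hBl r' _ h₂) (hBr r _ h₃)
  have e1 : (⟨1 - r * a, h₁⟩ : B) - ⟨1 - r' * a, h₃⟩ = ⟨(r' - r) * a, hBr a _ hd⟩ := by
    ext; simp; noncomm_ring
  have e2 : (⟨1 - a * r, h₂⟩ : B) - ⟨1 - a * r', h₄⟩ = ⟨a * (r' - r), hBl a _ hd⟩ := by
    ext; simp; noncomm_ring
  rw [sub_eq_sub_iff_sub_eq_sub, ← map_sub, ← map_sub, e1, e2, htrace a (r' - r) hd]
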